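/- Let X and Y be real vector spaces equipped with n-norms. Suppose g : X → Y satisfies g(0) = 0, g is additive and ℚ-homogeneous, and g preserves every rational weak n-distance (‖x₁,…,xₙ‖ = q for q ∈ ℚ, q > 0, implies ‖g(x₁),…,g(xₙ)‖ = q). Then g preserves n-collinearity: if ‖x₁,…,xₙ‖ = 0 then ‖g(x₁),…,g(xₙ)‖ = 0. -/

import Mathlib

set_option linter.unusedSectionVars false

/-- An `n`-norm on a real vector space `X`: a map `(Fin n → X) → ℝ` that vanishes
exactly on linearly dependent tuples, is permutation invariant, absolutely
homogeneous in the first argument, and satisfies the triangle inequality in the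
first argument. -/
structure NNorm (n : ℕ) [NeZero n] (X : Type*) [AddCommGroup X] [Module ℝ X] where
  toFun : (Fin n → X) → ℝ
  eq_zero_iff : ∀ v : Fin n → X, toFun v = 0 ↔ ¬ LinearIndependent ℝ v
  perm_invariant : ∀ (v : Fin n → X) (σ : Equiv.Perm (Fin n)), toFun (v ∘ σ) = toFun v
  smul_first : ∀ (v : Fin n → X) (α : ℝ),
    toFun (Function.update v 0 (α • v 0)) = |α| * toFun v
  add_le_first : ∀ (v : Fin n → X) (x y : X),
    toFun (Function.update v 0 (x + y)) ≤
      toFun (Function.update v 0 x) + toFun (Function.update v 0 y)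

namespace NNorm

variable {n : ℕ} [NeZero n] {Z : Type*} [AddCommGroup Z] [Module ℝ Z] (N : NNorm n Z)

private lemma update_comp_swap (v : Fin n → Z) (i : Fin n) (x : Z) :
    (Function.update v i x) ∘ (Equiv.swap 0 i) = Function.update (v ∘ Equiv.swap 0 i) 0 x := by
  funext j
  rcases eq_or_ne j 0 with rfl | hj
  · have hs : (Equiv.swap (0:Fin n) i) 0 = i := Equiv.swap_apply_left 0 i
    simp only [Function.comp_apply]
    rw [hs, Function.update_self, Function.update_self]
  · have h1 : Equiv.swap (0 : Fin n) i j ≠ i := by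
      intro h
      apply hj
      have := (Equiv.swap (0 : Fin n) i).injective (a₁ := j) (a₂ := 0)
      exact this (by simpa [Equiv.swap_apply_left] using h)
    simp [Function.update_of_ne hj, Function.update_of_ne h1, Function.comp]

lemma toFun_update_eq (v : Fin n → Z) (i : Fin n) (x : Z) :
    N.toFun (Function.update v i x) = N.toFun (Function.update (v ∘ Equiv.swap 0 i) 0 x) := by
  rw [← update_comp_swap, N.perm_invariant]

lemma smul_update (v : Fin n → Z) (i : Fin n) (α : ℝ) (x : Z) :
    N.toFun (Function.update v i (α • x)) = |α| * N.toFun (Function.update v i x) := by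
  rw [N.toFun_update_eq v i (α • x), N.toFun_update_eq v i x]
  have h := N.smul_first (Function.update (v ∘ Equiv.swap 0 i) 0 x) α
  simpa [Function.update_idem] using h

lemma add_le_update (v : Fin n → Z) (i : Fin n) (x y : Z) :
    N.toFun (Function.update v i (x + y)) ≤
      N.toFun (Function.update v i x) + N.toFun (Function.update v i y) := by
  rw [N.toFun_update_eq v i (x + y), N.toFun_update_eq v i x, N.toFun_update_eq v i y]
  exact N.add_le_first _ x y

lemma nonneg (v : Fin n → Z) : 0 ≤ N.toFun v := by
  have h0 : N.toFun (Function.update v 0 (0 : Z)) = 0 := by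
    have := N.smul_first v 0
    simpa using this
  have h1 := N.add_le_first v (v 0) (-(v 0))
  have h2 : N.toFun (Function.update v 0 (v 0)) = N.toFun v := by
    rw [Function.update_eq_self]
  have h3 : N.toFun (Function.update v 0 (-(v 0))) = N.toFun v := by
    have := N.smul_first v (-1)
    simpa using this
  rw [add_neg_cancel, h0] at h1
  linarith

lemma dep_of_mem_span (v : Fin n → Z) (i : Fin n) (z : Z)
    (hz : z ∈ Submodule.span ℝ (v '' {i}ᶜ)) :
    N.toFun (Function.update v i z) = 0 := by
  apply (N.eq_zero_iff _).2
  intro hind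
  have himg : (Function.update v i z) '' ({i}ᶜ : Set (Fin n)) = v '' {i}ᶜ :=
    Set.image_congr (fun a ha => Function.update_of_ne (by simpa using ha) _ _)
  have hns := hind.notMem_span_image (s := ({i}ᶜ : Set (Fin n))) (x := i) (by simp)
  rw [himg, Function.update_self] at hns
  exact hns hz

lemma add_span_le (v : Fin n → Z) (i : Fin n) (z : Z)
    (hz : z ∈ Submodule.span ℝ (v '' {i}ᶜ)) :
    N.toFun (Function.update v i (v i + z)) ≤ N.toFun v := by
  have h := N.add_le_update v i (v i) z
  rw [Function.update_eq_self, N.dep_of_mem_span v i z hz, add_zero] at h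
  exact h

lemma add_span_eq (v : Fin n → Z) (i : Fin n) (z : Z)
    (hz : z ∈ Submodule.span ℝ (v '' {i}ᶜ)) :
    N.toFun (Function.update v i (v i + z)) = N.toFun v := by
  refine le_antisymm (N.add_span_le v i z hz) ?_
  set w := Function.update v i (v i + z) with hw
  have himg : w '' ({i}ᶜ : Set (Fin n)) = v '' {i}ᶜ :=
    Set.image_congr (fun a ha => Function.update_of_ne (by simpa using ha) _ _)
  have hz' : -z ∈ Submodule.span ℝ (w '' {i}ᶜ) := by
    rw [himg]; exact neg_mem hz
  have h := N.add_span_le w i (-z) hz'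
  have hwv : Function.update w i (w i + -z) = v := by
    funext j
    rcases eq_or_ne j i with rfl | hj
    · simp [hw]
    · simp [Function.update_of_ne hj, hw]
  rw [hwv] at h
  exact h

lemma toFun_smul_finset (y : Fin n → Z) (t : ℝ) (r : Finset (Fin n)) :
    N.toFun (fun i => if i ∈ r then t • y i else y i) = |t| ^ r.card * N.toFun y := by
  classical
  induction r using Finset.induction_on with
  | empty => simp
  | @insert i r' hi ih =>
    have heq : (fun j => if j ∈ insert i r' then t • y j else y j) =
        Function.update (fun j => if j ∈ r' then t • y j else y j) i (t • y i) := by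
      funext j
      rcases eq_or_ne j i with rfl | hj
      · simp [hi]
      · simp [Function.update_of_ne hj, Finset.mem_insert, hj]
    have hself : Function.update (fun j => if j ∈ r' then t • y j else y j) i (y i) =
        (fun j => if j ∈ r' then t • y j else y j) := by
      funext j
      rcases eq_or_ne j i with rfl | hj
      · simp [hi]
      · simp [Function.update_of_ne hj]
    rw [heq, N.smul_update _ i t (y i), hself, ih,
      Finset.card_insert_of_notMem hi, pow_succ]
    ring

lemma toFun_add_finset (w d : Fin n → Z) (r : Finset (Fin n))
    (hd : ∀ i ∈ r, d i ∈ Submodule.span ℝ (w '' ((↑r : Set (Fin n)))ᶜ)) :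
    N.toFun (fun i => if i ∈ r then w i + d i else w i) = N.toFun w := by
  classical
  induction r using Finset.induction_on with
  | empty => simp
  | @insert i r' hi ih =>
    have heq : (fun j => if j ∈ insert i r' then w j + d j else w j) =
        Function.update (fun j => if j ∈ r' then w j + d j else w j) i
          ((fun j => if j ∈ r' then w j + d j else w j) i + d i) := by
      funext j
      rcases eq_or_ne j i with rfl | hj
      · simp [hi]
      · simp [Function.update_of_ne hj, Finset.mem_insert, hj]
    have hsub : w '' ((↑(insert i r') : Set (Fin n)))ᶜ ⊆
        (fun j => if j ∈ r' then w j + d j else w j) '' ({i}ᶜ : Set (Fin n)) := by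
      rintro x ⟨j, hj, rfl⟩
      simp only [Finset.coe_insert, Set.mem_compl_iff, Set.mem_insert_iff, not_or] at hj
      refine ⟨j, by simpa using hj.1, ?_⟩
      show (if j ∈ r' then w j + d j else w j) = w j
      rw [if_neg (show j ∉ r' by simpa using hj.2)]
    have hspan : d i ∈ Submodule.span ℝ
        ((fun j => if j ∈ r' then w j + d j else w j) '' ({i}ᶜ : Set (Fin n))) :=
      Submodule.span_mono hsub (hd i (Finset.mem_insert_self i r'))
    rw [heq, N.add_span_eq _ i (d i) hspan]
    exact ih (fun j hj => by
      refine Submodule.span_mono (Set.image_mono ?_) (hd j (Finset.mem_insert_of_mem hj))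
      intro x hx
      simp only [Finset.coe_insert, Set.mem_compl_iff, Set.mem_insert_iff, not_or] at hx
      simpa using hx.2)

lemma mix_bound (a b : Fin n → Z) (s : Finset (Fin n)) :
    ∀ (r : Finset (Fin n)), Disjoint r s → ∀ t : ℝ, 0 ≤ t → t ≤ 1 →
    N.toFun (fun i => if i ∈ r then b i else if i ∈ s then a i + t • b i else a i)
      ≤ 2 ^ s.card *
        ∑ r' ∈ (Finset.univ : Finset (Fin n)).powerset,
          N.toFun (fun i => if i ∈ r' then b i else a i) := by
  classical
  set K := ∑ r' ∈ (Finset.univ : Finset (Fin n)).powerset,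
      N.toFun (fun i => if i ∈ r' then b i else a i) with hKdef
  have hK : (0:ℝ) ≤ K := Finset.sum_nonneg (fun r' _ => N.nonneg _)
  induction s using Finset.induction_on with
  | empty =>
    intro r _ t _ _
    simp only [Finset.notMem_empty, if_false, Finset.card_empty, pow_zero, one_mul]
    exact Finset.single_le_sum
      (f := fun r' => N.toFun (fun i => if i ∈ r' then b i else a i))
      (fun r' _ => N.nonneg _)
      (Finset.mem_powerset.2 (Finset.subset_univ r))
  | @insert i s' hi ih =>
    intro r hdisj t ht0 ht1
    have hir : i ∉ r := by
      have := Finset.disjoint_insert_right.1 hdisj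
      exact this.1
    have hdisj' : Disjoint r s' := (Finset.disjoint_insert_right.1 hdisj).2
    set T := fun (rr : Finset (Fin n)) => (fun j =>
      if j ∈ rr then b j else if j ∈ s' then a j + t • b j else a j) with hT
    have heq : (fun j => if j ∈ r then b j
        else if j ∈ insert i s' then a j + t • b j else a j) =
        Function.update (T r) i (a i + t • b i) := by
      funext j
      rcases eq_or_ne j i with rfl | hj
      · simp [hT, hir, Function.update_self]
      · simp [hT, Function.update_of_ne hj, Finset.mem_insert, hj]
    have hTi : T r i = a i := by
      simp [hT, hir, hi]
    have hupa : Function.update (T r) i (a i) = T r := by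
      rw [← hTi, Function.update_eq_self]
    have hupb : Function.update (T r) i (b i) = T (insert i r) := by
      funext j
      rcases eq_or_ne j i with rfl | hj
      · simp [hT]
      · simp [hT, Function.update_of_ne hj, Finset.mem_insert, hj]
    have htri := N.add_le_update (T r) i (a i) (t • b i)
    rw [hupa] at htri
    have hsm : N.toFun (Function.update (T r) i (t • b i))
        = t * N.toFun (Function.update (T r) i (b i)) := by
      rw [N.smul_update, abs_of_nonneg ht0]
    have h1 : N.toFun (T r) ≤ 2 ^ s'.card * K := ih r hdisj' t ht0 ht1
    have hdisj2 : Disjoint (insert i r) s' := by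
      rw [Finset.disjoint_insert_left]
      exact ⟨hi, hdisj'⟩
    have h2 : N.toFun (T (insert i r)) ≤ 2 ^ s'.card * K := ih (insert i r) hdisj2 t ht0 ht1
    have h3 : N.toFun (Function.update (T r) i (b i)) ≤ 2 ^ s'.card * K := by
      rw [hupb]; exact h2
    rw [heq]
    have hb : t * N.toFun (Function.update (T r) i (b i)) ≤ 2 ^ s'.card * K := by
      calc t * N.toFun (Function.update (T r) i (b i))
          ≤ t * (2 ^ s'.card * K) := mul_le_mul_of_nonneg_left h3 ht0
        _ ≤ 1 * (2 ^ s'.card * K) := by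
            refine mul_le_mul_of_nonneg_right ht1 ?_
            positivity
        _ = 2 ^ s'.card * K := one_mul _
    calc N.toFun (Function.update (T r) i (a i + t • b i))
        ≤ N.toFun (T r) + N.toFun (Function.update (T r) i (t • b i)) := htri
      _ = N.toFun (T r) + t * N.toFun (Function.update (T r) i (b i)) := by rw [hsm]
      _ ≤ 2 ^ s'.card * K + 2 ^ s'.card * K := add_le_add h1 hb
      _ = 2 ^ (insert i s').card * K := by
          rw [Finset.card_insert_of_notMem hi, pow_succ]
          ring

lemma pert_bound (a b : Fin n → Z) (s : Finset (Fin n)) (t : ℝ) (ht0 : 0 ≤ t) (ht1 : t ≤ 1) :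
    N.toFun a ≤ N.toFun (fun i => if i ∈ s then a i + t • b i else a i)
      + t * (s.card * (2 ^ n *
        ∑ r' ∈ (Finset.univ : Finset (Fin n)).powerset,
          N.toFun (fun i => if i ∈ r' then b i else a i))) := by
  classical
  set K := ∑ r' ∈ (Finset.univ : Finset (Fin n)).powerset,
      N.toFun (fun i => if i ∈ r' then b i else a i) with hKdef
  have hK : (0:ℝ) ≤ K := Finset.sum_nonneg (fun r' _ => N.nonneg _)
  induction s using Finset.induction_on with
  | empty => simp
  | @insert i s' hi ih =>
    set T := fun (ss : Finset (Fin n)) => (fun j =>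
      if j ∈ ss then a j + t • b j else a j) with hT
    have hTi : T s' i = a i := by simp [hT, hi]
    -- T s' = update (T s') i ((a i + t•b i) + (-(t • b i)))
    have key : N.toFun (T s') = N.toFun (Function.update (T s')
        i ((a i + t • b i) + (-(t • b i)))) := by
      congr 1
      rw [show (a i + t • b i) + (-(t • b i)) = a i by abel, ← hTi, Function.update_eq_self]
    have htri := N.add_le_update (T s') i (a i + t • b i) (-(t • b i))
    have hupA : Function.update (T s') i (a i + t • b i) = T (insert i s') := by
      funext j
      rcases eq_or_ne j i with rfl | hj
      · simp [hT]
      · simp [hT, Function.update_of_ne hj, Finset.mem_insert, hj]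
    have hupB : N.toFun (Function.update (T s') i (-(t • b i)))
        = t * N.toFun (Function.update (T s') i (b i)) := by
      rw [show -(t • b i) = (-t) • b i by simp, N.smul_update, abs_neg, abs_of_nonneg ht0]
    have hupb2 : Function.update (T s') i (b i) =
        (fun j => if j ∈ ({i} : Finset (Fin n)) then b j
          else if j ∈ s' then a j + t • b j else a j) := by
      funext j
      rcases eq_or_ne j i with rfl | hj
      · simp
      · simp [Function.update_of_ne hj, hT, hj]
    have hmix : N.toFun (Function.update (T s') i (b i)) ≤ 2 ^ s'.card * K := by
      rw [hupb2]
      exact N.mix_bound a b s' {i} (by simpa using hi) t ht0 ht1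
    have hcard : (2:ℝ) ^ s'.card ≤ 2 ^ n := by
      apply pow_le_pow_right₀ (by norm_num)
      calc s'.card ≤ (Finset.univ : Finset (Fin n)).card := Finset.card_le_card (Finset.subset_univ _)
        _ = n := by simp
    have h2 : N.toFun (T s') ≤ N.toFun (T (insert i s')) + t * (2 ^ n * K) := by
      rw [key]
      calc N.toFun (Function.update (T s') i ((a i + t • b i) + (-(t • b i))))
          ≤ N.toFun (Function.update (T s') i (a i + t • b i))
            + N.toFun (Function.update (T s') i (-(t • b i))) := htri
        _ = N.toFun (T (insert i s')) + t * N.toFun (Function.update (T s') i (b i)) := by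
            rw [hupA, hupB]
        _ ≤ N.toFun (T (insert i s')) + t * (2 ^ n * K) := by
            refine add_le_add le_rfl ?_
            refine mul_le_mul_of_nonneg_left ?_ ht0
            calc N.toFun (Function.update (T s') i (b i)) ≤ 2 ^ s'.card * K := hmix
              _ ≤ 2 ^ n * K := mul_le_mul_of_nonneg_right hcard hK
    have h1 : N.toFun a ≤ N.toFun (T s') + t * (s'.card * (2 ^ n * K)) := ih
    rw [Finset.card_insert_of_notMem hi]
    push_cast
    calc N.toFun a ≤ N.toFun (T s') + t * (s'.card * (2 ^ n * K)) := h1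
      _ ≤ (N.toFun (T (insert i s')) + t * (2 ^ n * K)) + t * (s'.card * (2 ^ n * K)) := by
          linarith
      _ = N.toFun (T (insert i s')) + t * ((s'.card + 1) * (2 ^ n * K)) := by ring

end NNorm


open Cardinal in
private lemma exists_extension {X : Type u} [AddCommGroup X] [Module ℝ X] {n : ℕ}
    (hrank : (n : Cardinal) ≤ Module.rank ℝ X) (v : Fin n → X) (s : Set (Fin n))
    (hs : LinearIndependent ℝ fun x : s => v (x : Fin n)) :
    ∃ y : Fin n → X, LinearIndependent ℝ y ∧ ∀ i ∈ s, y i = v i := by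
  classical
  have himg : LinearIndependent ℝ (fun x : (v '' s) => (x : X)) := LinearIndepOn.id_image hs
  obtain ⟨bset, _hbt, hVb, hspanb, hbind0⟩ :=
    exists_linearIndepOn_id_extension himg (Set.subset_univ _)
  have hbind : LinearIndependent ℝ ((↑) : bset → X) := hbind0
  have hspan_top : ⊤ ≤ Submodule.span ℝ (Set.range ((↑) : bset → X)) := by
    rw [Subtype.range_coe]
    exact fun x _ => hspanb (Set.mem_univ x)
  let B : Module.Basis bset ℝ X := Module.Basis.mk hbind hspan_top
  have hcardb : (n : Cardinal) ≤ #bset := by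
    rw [B.mk_eq_rank'']
    exact hrank
  have hV : #(↥(v '' s)) = Cardinal.lift.{u,0} #(↥s) := by
    have : Cardinal.lift.{0,u} #(↥(v '' s)) = Cardinal.lift.{u,0} #(↥s) := by
      apply Cardinal.mk_image_eq_of_injOn_lift
      intro x hx y hy hxy
      have := hs.injective (a₁ := ⟨x, hx⟩) (a₂ := ⟨y, hy⟩) (by simpa using hxy)
      exact congrArg Subtype.val this
    rwa [Cardinal.lift_id'] at this
  have hslt : Cardinal.lift.{u,0} #(↥s) < Cardinal.aleph0 :=
    Cardinal.lift_lt_aleph0.2 (Cardinal.lt_aleph0_of_finite _)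
  have hcompl : Cardinal.lift.{u,0} #(↥(sᶜ : Set (Fin n))) ≤ #(↥(bset \ v '' s : Set X)) := by
    have h1 : Cardinal.lift.{u,0} #(↥s) + Cardinal.lift.{u,0} #(↥(sᶜ : Set (Fin n)))
        = (n : Cardinal) := by
      rw [← Cardinal.lift_add, Cardinal.mk_sum_compl]
      simp
    have h2 : #(↥(bset \ v '' s : Set X)) + #(↥(v '' s)) = #bset :=
      Cardinal.mk_diff_add_mk hVb
    have h3 : Cardinal.lift.{u,0} #(↥(sᶜ : Set (Fin n))) + Cardinal.lift.{u,0} #(↥s)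
        ≤ #(↥(bset \ v '' s : Set X)) + Cardinal.lift.{u,0} #(↥s) := by
      calc Cardinal.lift.{u,0} #(↥(sᶜ : Set (Fin n))) + Cardinal.lift.{u,0} #(↥s)
          = (n : Cardinal) := by rw [add_comm]; exact h1
        _ ≤ #bset := hcardb
        _ = #(↥(bset \ v '' s : Set X)) + Cardinal.lift.{u,0} #(↥s) := by rw [h2.symm, hV]
    exact (Cardinal.add_le_add_iff_of_lt_aleph0 hslt).1 h3
  have hemb : Cardinal.lift.{u,0} #(↥(sᶜ : Set (Fin n)))
      ≤ Cardinal.lift.{0,u} #(↥(bset \ v '' s : Set X)) := by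
    rwa [Cardinal.lift_id']
  obtain ⟨f⟩ := Cardinal.lift_mk_le'.1 hemb
  refine ⟨fun i => if h : i ∈ s then v i else (f ⟨i, h⟩ : X), ?_, ?_⟩
  · -- linear independence
    set y : Fin n → bset := fun i =>
      if h : i ∈ s then ⟨v i, hVb (Set.mem_image_of_mem v h)⟩
      else ⟨(f ⟨i, h⟩ : X), ((f ⟨i, h⟩).2).1⟩ with hy
    have hyinj : Function.Injective y := by
      intro i j hij
      have hval := congrArg Subtype.val hij
      by_cases hi : i ∈ s <;> by_cases hj : j ∈ s
      · simp only [hy, dif_pos hi, dif_pos hj] at hval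
        have := hs.injective (a₁ := ⟨i, hi⟩) (a₂ := ⟨j, hj⟩) (by simpa using hval)
        exact congrArg Subtype.val this
      · exfalso
        simp only [hy, dif_pos hi, dif_neg hj] at hval
        exact (f ⟨j, hj⟩).2.2 (hval ▸ Set.mem_image_of_mem v hi)
      · exfalso
        simp only [hy, dif_pos hj, dif_neg hi] at hval
        exact (f ⟨i, hi⟩).2.2 (hval.symm ▸ Set.mem_image_of_mem v hj)
      · simp only [hy, dif_neg hi, dif_neg hj] at hval
        have h2 : f ⟨i, hi⟩ = f ⟨j, hj⟩ := Subtype.ext hval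
        have := f.injective h2
        simpa using congrArg Subtype.val this
    have := hbind.comp y hyinj
    convert this using 1
    funext i
    by_cases hi : i ∈ s <;> simp [hy, hi, Function.comp]
  · intro i hi
    simp [dif_pos hi]

/-- An additive, ℚ-homogeneous map preserving all positive rational weak
n-distances preserves n-collinearity. -/
theorem preserves_n_collinearity {n : ℕ} [NeZero n]
    {X Y : Type*} [AddCommGroup X] [Module ℝ X] [AddCommGroup Y] [Module ℝ Y]
    (NX : NNorm n X) (NY : NNorm n Y)
    (hrank : (n : Cardinal) ≤ Module.rank ℝ X)
    (g : X → Y) (h0 : g 0 = 0) (hadd : ∀ x y : X, g (x + y) = g x + g y)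
    (hQ : ∀ (q : ℚ) (x : X), g ((q : ℝ) • x) = (q : ℝ) • g x)
    (hq : ∀ (v : Fin n → X) (q : ℚ), 0 < q → NX.toFun v = (q : ℝ) →
      NY.toFun (fun i => g (v i)) = (q : ℝ)) :
    ∀ v : Fin n → X, NX.toFun v = 0 → NY.toFun (fun i => g (v i)) = 0 := by
  classical
  intro v hv0
  have hvdep : ¬ LinearIndependent ℝ v := (NX.eq_zero_iff v).1 hv0
  obtain ⟨s, hs0, hmax⟩ := exists_maximal_linearIndepOn ℝ v
  have hs : LinearIndependent ℝ (fun x : s => v x) := hs0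
  have hv_span : ∀ i ∉ s, v i ∈ Submodule.span ℝ (v '' s) := by
    intro i hi
    obtain ⟨c, hc, hcv⟩ := hmax i hi
    have := Submodule.smul_mem _ c⁻¹ hcv
    rwa [smul_smul, inv_mul_cancel₀ hc, one_smul] at this
  have hsne : ∃ i₀, i₀ ∉ s := by
    by_contra h
    push_neg at h
    apply hvdep
    have : LinearIndependent ℝ ((fun x : s => v x) ∘ (fun i => (⟨i, h i⟩ : s))) :=
      hs.comp _ (fun i j hij => by simpa using congrArg Subtype.val hij)
    exact this
  obtain ⟨i₀, hi₀⟩ := hsne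
  obtain ⟨yX, hyind, hyv⟩ := exists_extension hrank v s hs
  -- normalize
  set c := NX.toFun yX with hc
  have hcpos : 0 < c := by
    rcases lt_or_eq_of_le (NX.nonneg yX) with h | h
    · exact h
    · exact absurd hyind ((NX.eq_zero_iff yX).1 h.symm)
  set y₁ := Function.update yX i₀ (c⁻¹ • yX i₀) with hy₁
  have hNy₁ : NX.toFun y₁ = 1 := by
    rw [hy₁, NX.smul_update, Function.update_eq_self, abs_of_pos (inv_pos.2 hcpos), ← hc,
      inv_mul_cancel₀ (ne_of_gt hcpos)]
  have hy₁v : ∀ i ∈ s, y₁ i = v i := by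
    intro i hi
    rw [hy₁, Function.update_of_ne (by rintro rfl; exact hi₀ hi), hyv i hi]
  -- finset versions
  set Sf : Finset (Fin n) := Set.Finite.toFinset (Set.toFinite s) with hSf
  have hSfmem : ∀ i, i ∈ Sf ↔ i ∈ s := fun i => Set.Finite.mem_toFinset _
  set k := Sfᶜ.card with hk
  have hk1 : 1 ≤ k := by
    have : i₀ ∈ Sfᶜ := Finset.mem_compl.2 (fun h => hi₀ ((hSfmem i₀).1 h))
    exact Finset.card_pos.2 ⟨i₀, this⟩
  -- key computation: for t ≥ 0, NX of perturbed tuple is t ^ k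
  have hNXW : ∀ t : ℝ, 0 ≤ t →
      NX.toFun (fun i => if i ∈ Sfᶜ then v i + t • y₁ i else v i) = t ^ k := by
    intro t ht
    set base : Fin n → X := fun i => if i ∈ Sfᶜ then t • y₁ i else v i with hbase
    have hstep1 : NX.toFun (fun i => if i ∈ Sfᶜ then v i + t • y₁ i else v i)
        = NX.toFun base := by
      have heq : (fun i => if i ∈ Sfᶜ then v i + t • y₁ i else v i) =
          (fun i => if i ∈ Sfᶜ then base i + v i else base i) := by
        funext i
        by_cases hi : i ∈ Sfᶜ
        · simp only [hbase, if_pos hi]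
          abel
        · simp only [hbase, if_neg hi]
      rw [heq]
      apply NX.toFun_add_finset
      intro i hi
      have hins : i ∉ s := fun h => (Finset.mem_compl.1 hi) ((hSfmem i).2 h)
      refine Submodule.span_mono ?_ (hv_span i hins)
      rintro x ⟨j, hjs, rfl⟩
      have hjSf : j ∈ Sf := (hSfmem j).2 hjs
      have hjc : j ∉ Sfᶜ := fun h => (Finset.mem_compl.1 h) hjSf
      exact ⟨j, by simpa using hjc, by simp only [hbase, if_neg hjc]⟩
    have hstep2 : NX.toFun base = |t| ^ k * NX.toFun y₁ := by
      have heq : base = fun i => if i ∈ Sfᶜ then t • y₁ i else y₁ i := by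
        funext i
        by_cases hi : i ∈ Sfᶜ
        · simp only [hbase, if_pos hi]
        · have his : i ∈ s := (hSfmem i).1 (by simpa using hi)
          simp only [hbase, if_neg hi]
          exact (hy₁v i his).symm
      rw [heq]
      exact NX.toFun_smul_finset y₁ t Sfᶜ
    rw [hstep1, hstep2, hNy₁, mul_one, abs_of_nonneg ht]
  -- bound for every m ≥ 1
  set a : Fin n → Y := fun i => g (v i) with ha
  set b : Fin n → Y := fun i => g (y₁ i) with hb
  set K := ∑ r' ∈ (Finset.univ : Finset (Fin n)).powerset,
      NY.toFun (fun i => if i ∈ r' then b i else a i) with hK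
  have hK0 : (0:ℝ) ≤ K := Finset.sum_nonneg (fun r' _ => NY.nonneg _)
  set C : ℝ := (k : ℝ) * (2 ^ n * K) with hC
  have hC0 : 0 ≤ C := by positivity
  have hbound : ∀ m : ℕ, 1 ≤ m → NY.toFun a ≤ (1 + C) / m := by
    intro m hm
    set tq : ℚ := 1 / m with htq
    have hm0' : 0 < m := hm
    have htq0 : 0 < tq := by
      rw [htq]
      positivity
    set t : ℝ := (tq : ℝ) with htr
    have ht0 : 0 < t := by rw [htr]; exact_mod_cast htq0
    have hmQ : (1:ℚ) ≤ (m:ℚ) := by exact_mod_cast hm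
    have htq1 : tq ≤ 1 := by
      rw [htq, div_le_one (by exact_mod_cast hm0')]
      exact hmQ
    have ht1 : t ≤ 1 := by rw [htr]; exact_mod_cast htq1
    have hNX : NX.toFun (fun i => if i ∈ Sfᶜ then v i + t • y₁ i else v i)
        = ((tq ^ k : ℚ) : ℝ) := by
      rw [hNXW t (le_of_lt ht0)]
      push_cast
      rfl
    have hqpos : 0 < tq ^ k := pow_pos htq0 k
    have hNY := hq _ (tq ^ k) hqpos hNX
    have hgW : (fun i => g ((fun i => if i ∈ Sfᶜ then v i + t • y₁ i else v i) i))
        = (fun i => if i ∈ Sfᶜ then a i + t • b i else a i) := by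
      funext i
      by_cases hi : i ∈ Sfᶜ
      · simp only [if_pos hi]
        rw [hadd, htr, hQ tq (y₁ i)]
      · simp [hi, ha]
    rw [hgW] at hNY
    have hpert := NY.pert_bound a b Sfᶜ t (le_of_lt ht0) ht1
    rw [hNY] at hpert
    have htk : ((tq ^ k : ℚ) : ℝ) = t ^ k := by rw [htr]; push_cast; rfl
    have htkle : t ^ k ≤ t := pow_le_of_le_one (le_of_lt ht0) ht1 (by omega)
    have hfin : NY.toFun a ≤ t + t * C := by
      calc NY.toFun a ≤ ((tq ^ k : ℚ) : ℝ) + t * ((Sfᶜ.card : ℝ) * (2 ^ n * K)) := hpert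
        _ = t ^ k + t * C := by rw [htk, hC, ← hk]
        _ ≤ t + t * C := by linarith
    have htm : t = 1 / (m : ℝ) := by rw [htr, htq]; push_cast; ring
    rw [htm] at hfin
    have hm0 : (0:ℝ) < m := by exact_mod_cast hm0'
    calc NY.toFun a ≤ 1 / m + 1 / m * C := hfin
      _ = (1 + C) / m := by field_simp
  -- conclude
  by_contra hne
  have hpos : 0 < NY.toFun a := lt_of_le_of_ne (NY.nonneg a) (Ne.symm hne)
  obtain ⟨m, hm⟩ := exists_nat_gt ((1 + C) / NY.toFun a)
  have hm1 : 1 ≤ m := by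
    by_contra h
    push_neg at h
    interval_cases m
    simp only [Nat.cast_zero] at hm
    nlinarith [div_nonneg (by linarith : (0:ℝ) ≤ 1 + C) (le_of_lt hpos)]
  have h1 := hbound m hm1
  have hmR : (0:ℝ) < m := by exact_mod_cast hm1
  have hlt : 1 + C < NY.toFun a * m := by
    rw [div_lt_iff₀ hpos] at hm
    nlinarith
  rw [le_div_iff₀ hmR] at h1
  nlinarith
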